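/- (Lipschitz continuity of the Gaussian sequence risk.) Let Θ = {θ ∈ ℝ^d : ‖θ‖₂ ≤ B} and let θ̂ : ℝ^d → Θ be any measurable estimator. Then the risk R(θ̂, θ) = E_{X~N(θ,I)}[‖θ̂(X) − θ‖₂²] is Lipschitz continuous in θ over Θ with respect to the ℓ₂ norm, with Lipschitz constant at most 4(B + √d·B²). -/

import Mathlib

open MeasureTheory

/-- The Gaussian measure `N(θ, I_d)` on `ℝ^d`. -/
noncomputable def gaussianSeq (d : ℕ) (θ : EuclideanSpace ℝ (Fin d)) :
    Measure (EuclideanSpace ℝ (Fin d)) :=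
  (Measure.pi fun _ : Fin d => ProbabilityTheory.gaussianReal 0 1).map
    (fun x => θ + (WithLp.equiv 2 (Fin d → ℝ)).symm x)

open ProbabilityTheory

section Aux

theorem lintegral_pi_prod {n : ℕ} {E : Fin n → Type*} [∀ i, MeasurableSpace (E i)]
    (μ : ∀ i, Measure (E i)) [∀ i, SigmaFinite (μ i)]
    {g : ∀ i, E i → ENNReal} (hg : ∀ i, Measurable (g i)) :
    ∫⁻ x, ∏ i, g i (x i) ∂(Measure.pi μ) = ∏ i, ∫⁻ y, g i y ∂(μ i) := by
  induction n with
  | zero => simp [lintegral_const, Measure.pi_empty_univ]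
  | succ n ih =>
    have hmp := (measurePreserving_piFinSuccAbove μ 0).symm
    rw [← hmp.lintegral_comp_emb (MeasurableEquiv.measurableEmbedding _)]
    simp_rw [MeasurableEquiv.piFinSuccAbove_symm_apply, Fin.insertNthEquiv,
      Fin.prod_univ_succ, Fin.insertNth_zero, Equiv.coe_fn_mk,
      Fin.cons_zero, Fin.cons_succ]
    have h2 : AEMeasurable (fun b : (j : Fin n) → E j.succ => ∏ x : Fin n, g x.succ (b x))
        (Measure.pi fun j => μ j.succ) :=
      Measurable.aemeasurable (by
        apply Finset.measurable_prod
        exact fun i _ => (hg i.succ).comp (measurable_pi_apply i))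
    exact (lintegral_prod_mul (hg 0).aemeasurable h2).trans (by rw [ih (fun i => μ i.succ) (fun i => hg _)])

theorem pi_gaussian_eq (d : ℕ) :
    (Measure.pi fun _ : Fin d => gaussianReal 0 1)
      = (volume : Measure (Fin d → ℝ)).withDensity
          (fun x => ∏ i, gaussianPDF 0 1 (x i)) := by
  refine Measure.pi_eq fun s hs => ?_
  have key := lintegral_indicator (μ := volume) (MeasurableSet.univ_pi hs)
    (fun x : Fin d → ℝ => ∏ i, gaussianPDF 0 1 (x i))
  rw [withDensity_apply _ (MeasurableSet.univ_pi hs), ← key]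
  have hind : ∀ x : Fin d → ℝ,
      Set.indicator (Set.pi Set.univ s) (fun x => ∏ i, gaussianPDF 0 1 (x i)) x
        = ∏ i, Set.indicator (s i) (gaussianPDF 0 1) (x i) := by
    intro x
    by_cases h : x ∈ Set.pi Set.univ s
    · rw [Set.indicator_of_mem h]
      exact Finset.prod_congr rfl fun i _ =>
        (Set.indicator_of_mem (h i trivial) _).symm
    · rw [Set.indicator_of_notMem h]
      obtain ⟨i, hi⟩ : ∃ i, x i ∉ s i := by simpa [Set.mem_pi] using h
      exact (Finset.prod_eq_zero (Finset.mem_univ i)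
        (Set.indicator_of_notMem hi _)).symm
  simp_rw [hind]
  rw [volume_pi, lintegral_pi_prod _
    (fun i => (measurable_gaussianPDF 0 1).indicator (hs i))]
  refine Finset.prod_congr rfl fun i _ => ?_
  rw [lintegral_indicator (hs i), ← gaussianReal_apply 0 one_ne_zero]

noncomputable def gaussP (d : ℕ) (θ : Fin d → ℝ) (y : Fin d → ℝ) : ℝ :=
  ∏ i, gaussianPDFReal (θ i) 1 (y i)

lemma gaussP_nonneg (d : ℕ) (θ y : Fin d → ℝ) : 0 ≤ gaussP d θ y :=
  Finset.prod_nonneg fun i _ => gaussianPDFReal_nonneg _ _ _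

lemma gaussP_meas (d : ℕ) (θ : Fin d → ℝ) : Measurable (gaussP d θ) :=
  Finset.measurable_prod _ fun i _ =>
    (measurable_gaussianPDFReal _ _).comp (measurable_pi_apply i)

lemma gaussP_integrable (d : ℕ) (θ : Fin d → ℝ) : Integrable (gaussP d θ) :=
  Integrable.fintype_prod fun i => integrable_gaussianPDFReal (θ i) 1

lemma gaussP_integral (d : ℕ) (θ : Fin d → ℝ) : ∫ y, gaussP d θ y = 1 := by
  have := integral_fintype_prod_eq_prod (fun i => gaussianPDFReal (θ i) 1) (μ := fun _ : Fin d => volume)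
  simpa [gaussP, integral_gaussianPDFReal_eq_one _ one_ne_zero, volume_pi] using this

lemma gauss1_mul (a b y : ℝ) :
    gaussianPDFReal a 1 y * gaussianPDFReal b 1 y
      = Real.exp (-(a-b)^2/4) * (gaussianPDFReal ((a+b)/2) 1 y)^2 := by
  simp only [gaussianPDFReal, NNReal.coe_one, mul_one]
  have key : Real.exp (-(y-a)^2/2) * Real.exp (-(y-b)^2/2)
      = Real.exp (-(a-b)^2/4) * Real.exp (-(y-(a+b)/2)^2/2)^2 := by
    rw [← Real.exp_add, ← Real.exp_nat_mul, ← Real.exp_add]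
    exact congrArg Real.exp (by push_cast; ring)
  calc (Real.sqrt (2*Real.pi))⁻¹ * Real.exp (-(y-a)^2/2)
        * ((Real.sqrt (2*Real.pi))⁻¹ * Real.exp (-(y-b)^2/2))
      = (Real.sqrt (2*Real.pi))⁻¹ * (Real.sqrt (2*Real.pi))⁻¹
        * (Real.exp (-(y-a)^2/2) * Real.exp (-(y-b)^2/2)) := by ring
    _ = (Real.sqrt (2*Real.pi))⁻¹ * (Real.sqrt (2*Real.pi))⁻¹
        * (Real.exp (-(a-b)^2/4) * Real.exp (-(y-(a+b)/2)^2/2)^2) := by rw [key]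
    _ = Real.exp (-(a-b)^2/4) * ((Real.sqrt (2*Real.pi))⁻¹ * Real.exp (-(y-(a+b)/2)^2/2))^2 := by
        ring

lemma gaussP_mul (d : ℕ) (a b y : Fin d → ℝ) :
    gaussP d a y * gaussP d b y
      = (Real.exp (-(∑ i, (a i - b i)^2)/8) * gaussP d (fun i => (a i + b i)/2) y)^2 := by
  unfold gaussP
  rw [← Finset.prod_mul_distrib,
    Finset.prod_congr rfl (fun i _ => gauss1_mul (a i) (b i) (y i)),
    Finset.prod_mul_distrib, ← Real.exp_sum, mul_pow, ← Finset.prod_pow]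
  congr 1
  rw [← Real.exp_nat_mul]
  refine congrArg Real.exp ?_
  rw [Finset.sum_congr rfl (fun i (_ : i ∈ Finset.univ) =>
    show -(a i - b i)^2/4 = (a i - b i)^2 * (-1/4) by ring), ← Finset.sum_mul]
  push_cast; ring

lemma amgm_abs_sub (u v w c : ℝ) (hu : 0 ≤ u) (hv : 0 ≤ v) (hw : 0 ≤ w)
    (hw2 : w^2 = u*v) (hc : 0 < c) :
    |u - v| ≤ (1/(2*c) + c/2)*(u+v) + (c - 1/c)*w := by
  have ha := Real.sq_sqrt hu
  have hb := Real.sq_sqrt hv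
  have ha0 := Real.sqrt_nonneg u
  have hb0 := Real.sqrt_nonneg v
  have hw' : w = Real.sqrt u * Real.sqrt v := by
    rw [← Real.sqrt_mul hu, ← hw2, Real.sqrt_sq hw]
  set p := Real.sqrt u
  set q := Real.sqrt v
  have habs : |u - v| = |p - q| * (p + q) := by
    rw [← ha, ← hb, ← abs_of_nonneg (add_nonneg ha0 hb0), ← abs_mul]
    congr 1; ring
  rw [habs, hw']
  have h1 : |p - q| * (p + q) * (2*c) ≤ (p-q)^2 + c^2*(p+q)^2 := by
    nlinarith [sq_nonneg (|p - q| - c*(p+q)), sq_abs (p - q)]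
  have hk : |p - q| * (p + q) ≤ (p-q)^2/(2*c) + c*(p+q)^2/2 := by
    rw [show (p-q)^2/(2*c) + c*(p+q)^2/2 = ((p-q)^2 + c^2*(p+q)^2)/(2*c) by
      field_simp, le_div_iff₀ (by positivity)]
    exact h1
  calc |p - q| * (p + q) ≤ (p-q)^2/(2*c) + c*(p+q)^2/2 := hk
    _ = (1/(2*c) + c/2)*(p^2+q^2) + (c - 1/c)*(p*q) := by field_simp; ring
    _ = (1/(2*c) + c/2)*(u+v) + (c - 1/c)*(p*q) := by rw [ha, hb]

lemma gaussP_tv (d : ℕ) (a b : Fin d → ℝ) (t : ℝ) (ht : 0 < t)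
    (hT : ∑ i, (a i - b i)^2 = t^2) :
    ∫ y, |gaussP d a y - gaussP d b y| ≤ t := by
  set A := Real.exp (-t^2/8) with hA
  set m : Fin d → ℝ := fun i => (a i + b i)/2 with hm
  have hc : (0:ℝ) < t/4 := by linarith
  have hptw : ∀ y, |gaussP d a y - gaussP d b y|
      ≤ (1/(2*(t/4)) + (t/4)/2)*(gaussP d a y + gaussP d b y)
        + ((t/4) - 1/(t/4))*(A * gaussP d m y) := by
    intro y
    refine amgm_abs_sub _ _ _ _ (gaussP_nonneg d a y) (gaussP_nonneg d b y)
      (mul_nonneg (Real.exp_nonneg _) (gaussP_nonneg d m y)) ?_ hc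
    rw [hA, ← hT]
    exact (gaussP_mul d a b y).symm
  have hIa := gaussP_integrable d a
  have hIb := gaussP_integrable d b
  have hIm := gaussP_integrable d m
  have hR1 : Integrable (fun y => (1/(2*(t/4)) + (t/4)/2)*(gaussP d a y + gaussP d b y)) :=
    (hIa.add hIb).const_mul _
  have hR2 : Integrable (fun y => ((t/4) - 1/(t/4))*(A * gaussP d m y)) :=
    (hIm.const_mul A).const_mul _
  have hL : Integrable (fun y => |gaussP d a y - gaussP d b y|) := (hIa.sub hIb).abs
  have hmono := integral_mono hL (hR1.add hR2) hptw
  simp only [Pi.add_apply] at hmono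
  rw [integral_add hR1 hR2, integral_const_mul, integral_const_mul,
    integral_add hIa hIb, gaussP_integral, gaussP_integral, integral_const_mul,
    gaussP_integral] at hmono
  refine hmono.trans ?_
  have hA1 : A ≤ 1 := Real.exp_le_one_iff.mpr (by nlinarith [sq_nonneg t])
  have hA2 : 1 - t^2/8 ≤ A := by
    have := Real.add_one_le_exp (-t^2/8); rw [← hA] at this; linarith
  have ht2 : (0:ℝ) < t^2 := by positivity
  rw [show (1/(2*(t/4)) + (t/4)/2)*((1:ℝ)+1) + ((t/4) - 1/(t/4))*(A*1)
      = 4/t + t/4 + (t/4)*A - (4/t)*A by field_simp; ring]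
  rw [← mul_le_mul_iff_of_pos_right ht]
  have hexp : (4/t + t/4 + (t/4)*A - (4/t)*A) * t = 4 + t^2/4 + (t^2/4)*A - 4*A := by
    field_simp
  rw [hexp]
  nlinarith [mul_nonneg (sub_nonneg.2 hA1) ht2.le,
    mul_nonneg (sub_nonneg.2 hA2) ht2.le, ht2]

lemma risk_repr (d : ℕ) (θ : EuclideanSpace ℝ (Fin d)) (f : EuclideanSpace ℝ (Fin d) → ℝ)
    (hf : Measurable f) :
    ∫ x, f x ∂(gaussianSeq d θ)
      = ∫ y : Fin d → ℝ, f ((WithLp.equiv 2 (Fin d → ℝ)).symm y)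
          * gaussP d (fun i => θ i) y := by
  have hι : Measurable fun x : Fin d → ℝ => (WithLp.equiv 2 (Fin d → ℝ)).symm x :=
    WithLp.measurable_toLp 2 (Fin d → ℝ)
  have hT : Measurable fun x : Fin d → ℝ => θ + (WithLp.equiv 2 (Fin d → ℝ)).symm x :=
    measurable_const.add hι
  rw [gaussianSeq, integral_map hT.aemeasurable hf.aestronglyMeasurable, pi_gaussian_eq]
  have hdd : (fun x : Fin d → ℝ => ∏ i, gaussianPDF 0 1 (x i))
      = fun x => ((∏ i, Real.toNNReal (gaussianPDFReal 0 1 (x i)) : NNReal) : ENNReal) := by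
    funext x; rw [ENNReal.coe_finset_prod]; rfl
  have hnn : Measurable fun x : Fin d → ℝ => ∏ i, Real.toNNReal (gaussianPDFReal 0 1 (x i)) :=
    Finset.measurable_prod _ fun i _ =>
      ((measurable_gaussianPDFReal 0 1).comp (measurable_pi_apply i)).real_toNNReal
  rw [hdd, integral_withDensity_eq_integral_smul hnn]
  have hsmul : ∀ x : Fin d → ℝ,
      (∏ i, Real.toNNReal (gaussianPDFReal 0 1 (x i)))
          • f (θ + (WithLp.equiv 2 (Fin d → ℝ)).symm x)
        = f (θ + (WithLp.equiv 2 (Fin d → ℝ)).symm x) * gaussP d 0 x := by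
    intro x
    rw [NNReal.smul_def, NNReal.coe_prod,
      Finset.prod_congr rfl fun i _ => Real.coe_toNNReal _ (gaussianPDFReal_nonneg 0 1 (x i)),
      mul_comm]
    rfl
  simp_rw [hsmul]
  rw [← integral_sub_right_eq_self
    (fun y => f (θ + (WithLp.equiv 2 (Fin d → ℝ)).symm y) * gaussP d 0 y)
    ((fun i => θ i) : Fin d → ℝ)]
  refine integral_congr_ae (Filter.Eventually.of_forall fun y => ?_)
  have h1 : θ + (WithLp.equiv 2 (Fin d → ℝ)).symm (y - fun i => θ i)
      = (WithLp.equiv 2 (Fin d → ℝ)).symm y := by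
    ext i
    simp only [WithLp.ofLp_add, Pi.add_apply, WithLp.equiv_symm_apply, WithLp.ofLp_toLp, Pi.sub_apply]
    ring
  have h2 : gaussP d 0 (y - fun i => θ i) = gaussP d (fun i => θ i) y := by
    refine Finset.prod_congr rfl fun i _ => ?_
    simp [gaussianPDFReal, Pi.sub_apply, sub_zero]
  dsimp only
  rw [h1, h2]

end Aux

/-- (Lipschitz continuity of the Gaussian sequence risk.) For any measurable estimator
`est` taking values in the ball of radius `B`, the risk
`R(est, θ) = E_{X ~ N(θ, I)}[‖est X − θ‖²]` is Lipschitz in `θ` over the ball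
`{‖θ‖ ≤ B}` with constant `4(B + √d B²)`. -/
theorem gaussian_sequence_risk_lipschitz (d : ℕ) (hd : 1 ≤ d) (B : ℝ) (hB : 0 < B)
    (est : EuclideanSpace ℝ (Fin d) → EuclideanSpace ℝ (Fin d))
    (hmeas : Measurable est) (hval : ∀ x, ‖est x‖ ≤ B)
    (θ₁ θ₂ : EuclideanSpace ℝ (Fin d)) (h₁ : ‖θ₁‖ ≤ B) (h₂ : ‖θ₂‖ ≤ B) :
    |(∫ x, ‖est x - θ₁‖ ^ 2 ∂(gaussianSeq d θ₁)) -
        ∫ x, ‖est x - θ₂‖ ^ 2 ∂(gaussianSeq d θ₂)| ≤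
      4 * (B + Real.sqrt d * B ^ 2) * ‖θ₁ - θ₂‖ := by
  rcases eq_or_ne θ₁ θ₂ with rfl | hne
  · simp
  set t := ‖θ₁ - θ₂‖ with htdef
  have ht : 0 < t := norm_pos_iff.mpr (sub_ne_zero.mpr hne)
  have hι : Measurable fun x : Fin d → ℝ => (WithLp.equiv 2 (Fin d → ℝ)).symm x :=
    WithLp.measurable_toLp 2 (Fin d → ℝ)
  have hf1 : Measurable fun x : EuclideanSpace ℝ (Fin d) => ‖est x - θ₁‖ ^ 2 :=
    ((hmeas.sub measurable_const).norm.pow_const 2)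
  have hf2 : Measurable fun x : EuclideanSpace ℝ (Fin d) => ‖est x - θ₂‖ ^ 2 :=
    ((hmeas.sub measurable_const).norm.pow_const 2)
  rw [risk_repr d θ₁ _ hf1, risk_repr d θ₂ _ hf2]
  set G1 : (Fin d → ℝ) → ℝ :=
    fun y => ‖est ((WithLp.equiv 2 (Fin d → ℝ)).symm y) - θ₁‖ ^ 2 with hG1
  set G2 : (Fin d → ℝ) → ℝ :=
    fun y => ‖est ((WithLp.equiv 2 (Fin d → ℝ)).symm y) - θ₂‖ ^ 2 with hG2
  set P1 := gaussP d (fun i => θ₁ i) with hP1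
  set P2 := gaussP d (fun i => θ₂ i) with hP2
  -- basic facts
  have hest : ∀ (z : EuclideanSpace ℝ (Fin d)) (θ : EuclideanSpace ℝ (Fin d)), ‖θ‖ ≤ B →
      ‖est z - θ‖ ≤ 2 * B := by
    intro z θ hθ
    calc ‖est z - θ‖ ≤ ‖est z‖ + ‖θ‖ := norm_sub_le _ _
      _ ≤ B + B := add_le_add (hval z) hθ
      _ = 2 * B := by ring
  have hG1b : ∀ y, |G1 y| ≤ 4 * B^2 := by
    intro y
    rw [abs_of_nonneg (by positivity), hG1]
    dsimp only
    have := hest ((WithLp.equiv 2 (Fin d → ℝ)).symm y) θ₁ h₁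
    nlinarith [norm_nonneg (est ((WithLp.equiv 2 (Fin d → ℝ)).symm y) - θ₁)]
  have hGdiff : ∀ y, |G1 y - G2 y| ≤ 4 * B * t := by
    intro y
    set a := est ((WithLp.equiv 2 (Fin d → ℝ)).symm y) - θ₁
    set b := est ((WithLp.equiv 2 (Fin d → ℝ)).symm y) - θ₂
    have hab : ‖a - b‖ = t := by
      rw [htdef, sub_sub_sub_cancel_left, norm_sub_rev]
    have h1 : |‖a‖ - ‖b‖| ≤ t := hab ▸ abs_norm_sub_norm_le a b
    have h2 : ‖a‖ ≤ 2*B := hest _ _ h₁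
    have h3 : ‖b‖ ≤ 2*B := hest _ _ h₂
    have : G1 y - G2 y = (‖a‖ - ‖b‖) * (‖a‖ + ‖b‖) := by rw [hG1, hG2]; ring
    rw [this, abs_mul]
    have h4 : |‖a‖ + ‖b‖| ≤ 4 * B := by
      rw [abs_of_nonneg (add_nonneg (norm_nonneg a) (norm_nonneg b))]; linarith
    calc |‖a‖ - ‖b‖| * |‖a‖ + ‖b‖| ≤ t * (4*B) :=
          mul_le_mul h1 h4 (abs_nonneg _) ht.le
      _ = 4 * B * t := by ring
  -- measurability / integrability
  have hG1m : Measurable G1 := ((hmeas.comp hι).sub measurable_const).norm.pow_const 2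
  have hG2m : Measurable G2 := ((hmeas.comp hι).sub measurable_const).norm.pow_const 2
  have hIP1 := gaussP_integrable d (fun i => θ₁ i)
  have hIP2 := gaussP_integrable d (fun i => θ₂ i)
  have hI11 : Integrable (fun y => G1 y * P1 y) :=
    hIP1.bdd_mul hG1m.aestronglyMeasurable (c := 4*B^2) (Filter.Eventually.of_forall fun y => by
      simpa [Real.norm_eq_abs] using hG1b y)
  have hI12 : Integrable (fun y => G1 y * P2 y) :=
    hIP2.bdd_mul hG1m.aestronglyMeasurable (c := 4*B^2) (Filter.Eventually.of_forall fun y => by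
      simpa [Real.norm_eq_abs] using hG1b y)
  have hI22 : Integrable (fun y => G2 y * P2 y) :=
    hIP2.bdd_mul hG2m.aestronglyMeasurable (c := 4*B^2) (Filter.Eventually.of_forall fun y => by
      simp only [Real.norm_eq_abs]
      rw [abs_of_nonneg (by positivity), hG2]
      dsimp only
      have := hest ((WithLp.equiv 2 (Fin d → ℝ)).symm y) θ₂ h₂
      nlinarith [norm_nonneg (est ((WithLp.equiv 2 (Fin d → ℝ)).symm y) - θ₂)])
  -- splitting
  have e1 : ∫ y, G1 y * (P1 y - P2 y) = (∫ y, G1 y * P1 y) - ∫ y, G1 y * P2 y := by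
    rw [← integral_sub hI11 hI12]
    exact integral_congr_ae (Filter.Eventually.of_forall fun y => by ring)
  have e2 : ∫ y, (G1 y - G2 y) * P2 y = (∫ y, G1 y * P2 y) - ∫ y, G2 y * P2 y := by
    rw [← integral_sub hI12 hI22]
    exact integral_congr_ae (Filter.Eventually.of_forall fun y => by ring)
  have split : (∫ y, G1 y * P1 y) - (∫ y, G2 y * P2 y)
      = (∫ y, G1 y * (P1 y - P2 y)) + ∫ y, (G1 y - G2 y) * P2 y := by
    rw [e1, e2]; ring
  -- first term bound
  have hT : ∑ i, ((fun i => θ₁ i) i - (fun i => θ₂ i) i)^2 = t^2 := by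
    rw [htdef, EuclideanSpace.norm_eq, Real.sq_sqrt (by positivity)]
    exact Finset.sum_congr rfl fun i _ => by
      rw [PiLp.sub_apply, Real.norm_eq_abs, sq_abs]
  have htv := gaussP_tv d (fun i => θ₁ i) (fun i => θ₂ i) t ht hT
  have hIsub : Integrable (fun y => |P1 y - P2 y|) := (hIP1.sub hIP2).abs
  have hIG1sub : Integrable (fun y => G1 y * (P1 y - P2 y)) :=
    (hIP1.sub hIP2).bdd_mul hG1m.aestronglyMeasurable (c := 4*B^2) (Filter.Eventually.of_forall fun y => by
      simpa [Real.norm_eq_abs] using hG1b y)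
  have bound1 : |∫ y, G1 y * (P1 y - P2 y)| ≤ 4 * B^2 * t := by
    calc |∫ y, G1 y * (P1 y - P2 y)| ≤ ∫ y, |G1 y * (P1 y - P2 y)| := by
          simpa only [Real.norm_eq_abs] using
            norm_integral_le_integral_norm (μ := volume) (fun y => G1 y * (P1 y - P2 y))
      _ ≤ ∫ y, 4 * B^2 * |P1 y - P2 y| := by
          refine integral_mono hIG1sub.abs (hIsub.const_mul _) fun y => ?_
          rw [abs_mul]
          exact mul_le_mul_of_nonneg_right (hG1b y) (abs_nonneg _)
      _ = 4 * B^2 * ∫ y, |P1 y - P2 y| := integral_const_mul _ _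
      _ ≤ 4 * B^2 * t := by
          refine mul_le_mul_of_nonneg_left htv (by positivity)
  -- second term bound
  have hIG12P2 : Integrable (fun y => (G1 y - G2 y) * P2 y) :=
    hIP2.bdd_mul (hG1m.sub hG2m).aestronglyMeasurable (c := 4*B*t) (Filter.Eventually.of_forall fun y => by
      simpa [Real.norm_eq_abs] using hGdiff y)
  have bound2 : |∫ y, (G1 y - G2 y) * P2 y| ≤ 4 * B * t := by
    calc |∫ y, (G1 y - G2 y) * P2 y| ≤ ∫ y, |(G1 y - G2 y) * P2 y| := by
          simpa only [Real.norm_eq_abs] using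
            norm_integral_le_integral_norm (μ := volume) (fun y => (G1 y - G2 y) * P2 y)
      _ ≤ ∫ y, 4 * B * t * P2 y := by
          refine integral_mono hIG12P2.abs (hIP2.const_mul _) fun y => ?_
          rw [abs_mul, abs_of_nonneg (gaussP_nonneg d _ y)]
          exact mul_le_mul_of_nonneg_right (hGdiff y) (gaussP_nonneg d _ y)
      _ = 4 * B * t * ∫ y, P2 y := integral_const_mul _ _
      _ = 4 * B * t := by rw [hP2, gaussP_integral]; ring
  -- combine
  rw [split]
  have habs : |(∫ y, G1 y * (P1 y - P2 y)) + ∫ y, (G1 y - G2 y) * P2 y|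
      ≤ 4 * B^2 * t + 4 * B * t :=
    (abs_add_le _ _).trans (add_le_add bound1 bound2)
  refine habs.trans ?_
  have hd1 : 1 ≤ Real.sqrt d := by
    rw [show (1:ℝ) = Real.sqrt 1 by simp]
    exact Real.sqrt_le_sqrt (by exact_mod_cast hd)
  nlinarith [mul_nonneg (mul_nonneg (sub_nonneg.2 hd1) (sq_nonneg B)) ht.le]
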